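/- Let d ≥ 1 be an integer and set ν₀(d) := max{m ∈ ℕ≥1 : φ(m) ≤ d}, where φ is Euler's totient function (this maximum exists since φ(m) → ∞). Let K be a number field with [K : ℚ] ≤ d, let α, β be nonzero elements of K, and for each integer ν ≥ 0 put u_ν := ∑_{j=0}^{ν} α^j·β^{ν−j}. If u_ν = 0 for some ν ≥ 1, then u_ν = 0 for some ν with 1 ≤ ν ≤ ν₀(d) − 1. (Equivalently: either u_ν ≠ 0 for all ν ≥ 0, or there exists ν ≤ ν₀(d) − 1 with u_ν = 0.) -/

import Mathlib

open scoped Classical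

private lemma tot_lb : ∀ n : ℕ, (Odd n → n ≤ n.totient ^ 2) ∧ n ≤ 2 * n.totient ^ 2 := by
  intro n
  induction n using Nat.recOnPosPrimePosCoprime with
  | prime_pow p k hp hk =>
      rcases eq_or_ne p 2 with rfl | hodd
      · constructor
        · intro h
          exact absurd h (Nat.not_odd_iff_even.mpr (Nat.even_pow.mpr ⟨even_two, hk.ne'⟩))
        · rw [Nat.totient_prime_pow Nat.prime_two hk]
          have : 2 ^ k ≤ 2 * (2 ^ (k - 1) * (2 - 1)) ^ 2 := by
            rw [Nat.mul_one, ← pow_mul, ← pow_succ']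
            exact Nat.pow_le_pow_right (by norm_num) (by omega)
          exact this
      · have hp3 : 3 ≤ p := by
          have := hp.two_le; omega
        have key : p ^ k ≤ (p ^ (k - 1) * (p - 1)) ^ 2 := by
          have h1 : p ≤ (p - 1) ^ 2 := by
            obtain ⟨c, rfl⟩ : ∃ c, p = c + 3 := ⟨p - 3, by omega⟩
            have h2 : c + 3 - 1 = c + 2 := by omega
            rw [h2]; nlinarith
          calc p ^ k = p ^ (k - 1) * p := by rw [← pow_succ]; congr 1; omega
            _ ≤ (p ^ (k-1)) ^ 2 * (p - 1) ^ 2 := by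
                refine Nat.mul_le_mul ?_ h1
                exact Nat.le_self_pow (by norm_num) _
            _ = (p ^ (k - 1) * (p - 1)) ^ 2 := (mul_pow _ _ 2).symm
        rw [Nat.totient_prime_pow hp hk]
        exact ⟨fun _ => key, key.trans (Nat.le_mul_of_pos_left _ (by norm_num))⟩
  | zero => simp
  | one => simp
  | coprime a b ha hb hab iha ihb =>
      have htot : (a * b).totient = a.totient * b.totient := Nat.totient_mul hab
      have hta : 0 < a.totient := Nat.totient_pos.mpr (by omega)
      have htb : 0 < b.totient := Nat.totient_pos.mpr (by omega)
      constructor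
      · intro hodd
        rw [Nat.odd_mul] at hodd
        have := iha.1 hodd.1
        have := ihb.1 hodd.2
        calc a * b ≤ a.totient ^ 2 * b.totient ^ 2 := Nat.mul_le_mul ‹_› ‹_›
          _ = (a * b).totient ^ 2 := by rw [htot, mul_pow]
      · rcases Nat.even_or_odd a with hae | hao
        · have hbo : Odd b := by
            rcases Nat.even_or_odd b with hbe | h; swap; exact h
            exfalso
            have : (2 : ℕ) ∣ Nat.gcd a b := Nat.dvd_gcd hae.two_dvd hbe.two_dvd
            rw [hab] at this; omega
          calc a * b ≤ (2 * a.totient ^ 2) * b.totient ^ 2 :=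
                Nat.mul_le_mul iha.2 (ihb.1 hbo)
            _ = 2 * (a * b).totient ^ 2 := by rw [htot, mul_pow]; ring
        · calc a * b ≤ a.totient ^ 2 * (2 * b.totient ^ 2) :=
                Nat.mul_le_mul (iha.1 hao) ihb.2
            _ = 2 * (a * b).totient ^ 2 := by rw [htot, mul_pow]; ring

/-- `ν₀ d` is the largest positive integer `m` with `φ(m) ≤ d` (the set is bounded
since `φ(m) → ∞`). -/
noncomputable def nu0 (d : ℕ) : ℕ := sSup {m : ℕ | 0 < m ∧ Nat.totient m ≤ d}

/-- The field-theoretic content of Lemma 2.1: in a number field of degree at most `d`,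
if `u_ν = ∑_{j≤ν} α^j β^{ν−j}` vanishes for some `ν ≥ 1`, then it already vanishes for
some `ν` with `1 ≤ ν ≤ ν₀(d) − 1`. -/
theorem stmt_14 (d : ℕ) (hd : 1 ≤ d) (K : Type*) [Field K] [Algebra ℚ K]
    [FiniteDimensional ℚ K] (hK : Module.finrank ℚ K ≤ d)
    (α β : K) (hα : α ≠ 0) (hβ : β ≠ 0) (u : ℕ → K)
    (hu : ∀ ν : ℕ, u ν = ∑ j ∈ Finset.range (ν + 1), α ^ j * β ^ (ν - j)) :
    (∃ ν : ℕ, 1 ≤ ν ∧ u ν = 0) → ∃ ν : ℕ, 1 ≤ ν ∧ ν ≤ nu0 d - 1 ∧ u ν = 0 := by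
  rintro ⟨ν, hν1, hν0⟩
  have hchar : CharZero K := charZero_of_injective_algebraMap (algebraMap ℚ K).injective
  -- key identity
  have hgeom : ∀ n : ℕ, u n * (α - β) = α ^ (n + 1) - β ^ (n + 1) := by
    intro n
    rw [hu]
    simpa using geom_sum₂_mul α β (n + 1)
  -- α ≠ β
  have hne : α ≠ β := by
    intro h
    have hcalc : u ν = ((ν + 1 : ℕ) : K) * α ^ ν := by
      rw [hu]
      have he : ∀ j ∈ Finset.range (ν + 1), α ^ j * β ^ (ν - j) = α ^ ν := by
        intro j hj
        rw [← h, ← pow_add]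
        congr 1
        exact Nat.add_sub_cancel' (Nat.lt_succ_iff.mp (Finset.mem_range.mp hj))
      rw [Finset.sum_congr rfl he, Finset.sum_const, Finset.card_range, nsmul_eq_mul]
    rw [hcalc] at hν0
    rcases mul_eq_zero.mp hν0 with h1 | h1
    · exact Nat.cast_ne_zero.mpr (Nat.succ_ne_zero ν) h1
    · exact pow_ne_zero ν hα h1
  have hsub : α - β ≠ 0 := sub_ne_zero.mpr hne
  have hpow : α ^ (ν + 1) = β ^ (ν + 1) := by
    have := hgeom ν
    rw [hν0, zero_mul] at this
    linear_combination -this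
  -- the root of unity
  set ζ : K := α / β with hζ
  have hζpow : ζ ^ (ν + 1) = 1 := by
    rw [hζ, div_pow, hpow, div_self (pow_ne_zero _ hβ)]
  have hζne : ζ ≠ 1 := fun h => hne (by rw [hζ, div_eq_one_iff_eq hβ] at h; exact h)
  have hfin : IsOfFinOrder ζ := isOfFinOrder_iff_pow_eq_one.mpr ⟨ν + 1, ν.succ_pos, hζpow⟩
  set m : ℕ := orderOf ζ with hm
  have hm0 : 0 < m := hfin.orderOf_pos
  have hm2 : 2 ≤ m := by
    have hm1 : m ≠ 1 := fun h => hζne (orderOf_eq_one_iff.mp (hm ▸ h))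
    omega
  have hprim : IsPrimitiveRoot ζ m := IsPrimitiveRoot.orderOf ζ
  -- totient bound
  have hint : IsIntegral ℤ ζ := hprim.isIntegral hm0
  have htot : m.totient ≤ d := by
    have h1 : m.totient ≤ (minpoly ℤ ζ).natDegree := hprim.totient_le_degree_minpoly
    have h2 : minpoly ℚ ζ = (minpoly ℤ ζ).map (algebraMap ℤ ℚ) :=
      minpoly.isIntegrallyClosed_eq_field_fractions' ℚ hint
    have h3 : (minpoly ℚ ζ).natDegree = (minpoly ℤ ζ).natDegree := by
      rw [h2]
      exact Polynomial.natDegree_map_eq_of_injective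
        (algebraMap ℤ ℚ).injective_int _
    have h4 : (minpoly ℚ ζ).natDegree ≤ Module.finrank ℚ K := minpoly.natDegree_le ζ
    omega
  -- m ≤ nu0 d
  have hbdd : BddAbove {k : ℕ | 0 < k ∧ Nat.totient k ≤ d} := by
    refine ⟨2 * d ^ 2, fun k hk => ?_⟩
    have := (tot_lb k).2
    have h2 : k.totient ^ 2 ≤ d ^ 2 := Nat.pow_le_pow_left hk.2 2
    omega
  have hmle : m ≤ nu0 d := le_csSup hbdd ⟨hm0, htot⟩
  -- conclude with ν' = m - 1
  refine ⟨m - 1, by omega, by omega, ?_⟩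
  have hαβm : α ^ m = β ^ m := by
    have h1 : ζ ^ m = 1 := pow_orderOf_eq_one ζ
    rw [hζ, div_pow, div_eq_one_iff_eq (pow_ne_zero _ hβ)] at h1
    exact h1
  have := hgeom (m - 1)
  have hm1 : m - 1 + 1 = m := by omega
  rw [hm1, hαβm, sub_self] at this
  exact (mul_eq_zero.mp this).resolve_right hsub
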